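/- arXiv:2505.14879 — 4 statements merged into one kernel-verified Lean document; each statement's English description precedes it below -/
import Mathlib

section
/- Let K be a Markov kernel on H with invariant measure π, c : H → ℝ bounded, 0 ≤ β < 1, and S a closed subspace of L²(π) with orthogonal projection Π. Let T f (h) = c(h) + β ∫ f(h₁) K(h, dh₁), let J* be the unique fixed point of T in L²(π), and let V be the unique fixed point of Π ∘ T. Then ‖J* − V‖₂ ≤ (1/(1−β)) ‖J* − Π J*‖₂. -/
set_option maxHeartbeats 1000000
set_option synthInstance.maxHeartbeats 400000

open MeasureTheory ProbabilityTheory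
open scoped ENNReal

section Stmt3Aux

variable {H : Type*} [MeasurableSpace H]

private lemma stmt3_lintegral_sq_le {α : Type*} [MeasurableSpace α] (μ : Measure α)
    [IsProbabilityMeasure μ] {u : α → ℝ≥0∞} (hu : AEMeasurable u μ) :
    (∫⁻ x, u x ∂μ) ^ (2:ℝ) ≤ ∫⁻ x, u x ^ (2:ℝ) ∂μ := by
  have hpq : Real.HolderConjugate 2 2 := Real.HolderConjugate.two_two
  have h := ENNReal.lintegral_mul_le_Lp_mul_Lq μ hpq hu (aemeasurable_const (b := (1:ℝ≥0∞)))
  simp only [Pi.mul_apply, mul_one, ENNReal.one_rpow, lintegral_one, measure_univ] at h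
  calc (∫⁻ x, u x ∂μ) ^ (2:ℝ)
      ≤ ((∫⁻ x, u x ^ (2:ℝ) ∂μ) ^ (1/2:ℝ)) ^ (2:ℝ) := by
        refine ENNReal.rpow_le_rpow ?_ (by norm_num)
        simpa using h
    _ = ∫⁻ x, u x ^ (2:ℝ) ∂μ := by
        rw [← ENNReal.rpow_mul]; norm_num

private lemma stmt3_ae_ae_eq (K : Kernel H H) (π : Measure H)
    (hinv : π.bind (fun h => K h) = π) {u v : H → ℝ} (h : u =ᵐ[π] v) :
    ∀ᵐ h ∂π, u =ᵐ[K h] v := by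
  obtain ⟨N, hsub, hNm, hN0⟩ := exists_measurable_superset_of_null h
  have hbind : ∫⁻ h, K h N ∂π = 0 := by
    rw [← Measure.bind_apply hNm (Kernel.measurable K).aemeasurable, hinv]; exact hN0
  have hae : ∀ᵐ h ∂π, K h N = 0 := by
    have := (lintegral_eq_zero_iff (Kernel.measurable_coe K hNm)).1 hbind
    filter_upwards [this] with h hh
    simpa using hh
  filter_upwards [hae] with h hh
  exact measure_mono_null hsub hh

private lemma stmt3_kernel_L2 (K : Kernel H H) [IsMarkovKernel K] (π : Measure H)
    (hinv : π.bind (fun h => K h) = π) {w : H → ℝ} (hw : Measurable w) :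
    ∫⁻ h, (∫⁻ x, (‖w x‖₊ : ℝ≥0∞) ∂K h) ^ (2:ℝ) ∂π ≤ ∫⁻ x, (‖w x‖₊ : ℝ≥0∞) ^ (2:ℝ) ∂π := by
  have hmeas : Measurable fun x => (‖w x‖₊ : ℝ≥0∞) ^ (2:ℝ) :=
    hw.enorm.pow_const _
  calc ∫⁻ h, (∫⁻ x, (‖w x‖₊ : ℝ≥0∞) ∂K h) ^ (2:ℝ) ∂π
      ≤ ∫⁻ h, ∫⁻ x, (‖w x‖₊ : ℝ≥0∞) ^ (2:ℝ) ∂K h ∂π :=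
        lintegral_mono fun h => stmt3_lintegral_sq_le (K h) hw.enorm.aemeasurable
    _ = ∫⁻ x, (‖w x‖₊ : ℝ≥0∞) ^ (2:ℝ) ∂(π.bind fun h => K h) :=
        (Measure.lintegral_bind (Kernel.measurable K).aemeasurable hmeas.aemeasurable).symm
    _ = _ := by rw [hinv]

end Stmt3Aux

/-- With `K` a Markov kernel with invariant probability measure `π`, `c` bounded,
`0 ≤ β < 1`, `T f = c + β ∫ f dK` (as an operator on `L²(π)`), `J*` the fixed point of `T`,
`P` the orthogonal projection onto a closed subspace `S`, and `V` the fixed point of `P ∘ T`,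
we have `‖J* − V‖₂ ≤ (1/(1−β)) ‖J* − P J*‖₂`. -/
theorem stmt3 {H : Type*} [MeasurableSpace H] (K : Kernel H H) [IsMarkovKernel K]
    (π : Measure H) [IsProbabilityMeasure π]
    (hinv : π.bind (fun h => K h) = π)
    (c : H → ℝ) (hc : Measurable c) (C : ℝ) (hcb : ∀ h, |c h| ≤ C)
    (β : ℝ) (hβ0 : 0 ≤ β) (hβ1 : β < 1)
    (T : Lp ℝ 2 π → Lp ℝ 2 π)
    (hT : ∀ f : Lp ℝ 2 π, (T f : H → ℝ) =ᵐ[π] fun h => c h + β * ∫ x, f x ∂(K h))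
    (S : Submodule ℝ (Lp ℝ 2 π)) (hS : IsClosed (S : Set (Lp ℝ 2 π)))
    (P : Lp ℝ 2 π → Lp ℝ 2 π)
    (hPmem : ∀ f, P f ∈ S)
    (hPproj : ∀ f, ∀ s ∈ S, ‖f - P f‖ ≤ ‖f - s‖)
    (Jstar V : Lp ℝ 2 π) (hJ : T Jstar = Jstar) (hV : P (T V) = V) :
    ‖Jstar - V‖ ≤ (1 / (1 - β)) * ‖Jstar - P Jstar‖ := by
  -- a.e. integrability of Lp functions against the kernel
  have ae_int : ∀ f : Lp ℝ 2 π, ∀ᵐ h ∂π, Integrable (⇑f) (K h) := by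
    intro f
    have hm := Lp.aestronglyMeasurable f
    set w : H → ℝ := hm.mk ⇑f with hwdef
    have hwm : Measurable w := hm.stronglyMeasurable_mk.measurable
    have hweq : ⇑f =ᵐ[π] w := hm.ae_eq_mk
    have hfin : ∫⁻ x, (‖w x‖₊ : ℝ≥0∞) ^ (2:ℝ) ∂π < ∞ := by
      have h1 : eLpNorm w 2 π < ∞ := by
        rw [← eLpNorm_congr_ae hweq]; exact Lp.eLpNorm_lt_top f
      rw [eLpNorm_eq_lintegral_rpow_enorm_toReal two_ne_zero ENNReal.ofNat_ne_top] at h1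
      simp only [ENNReal.toReal_ofNat] at h1
      exact (ENNReal.rpow_lt_top_iff_of_pos (by norm_num : (0:ℝ) < 1/2)).1 h1
    have hgm : Measurable fun x => (‖w x‖₊ : ℝ≥0∞) ^ (2:ℝ) := hwm.enorm.pow_const _
    have hbound : ∫⁻ h, ∫⁻ x, (‖w x‖₊ : ℝ≥0∞) ^ (2:ℝ) ∂K h ∂π < ∞ := by
      calc ∫⁻ h, ∫⁻ x, (‖w x‖₊ : ℝ≥0∞) ^ (2:ℝ) ∂K h ∂π
          = ∫⁻ x, (‖w x‖₊ : ℝ≥0∞) ^ (2:ℝ) ∂(π.bind fun h => K h) :=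
            (Measure.lintegral_bind (Kernel.measurable K).aemeasurable hgm.aemeasurable).symm
        _ = ∫⁻ x, (‖w x‖₊ : ℝ≥0∞) ^ (2:ℝ) ∂π := by rw [hinv]
        _ < ∞ := hfin
    have hintmeas : Measurable fun h => ∫⁻ x, (‖w x‖₊ : ℝ≥0∞) ^ (2:ℝ) ∂K h :=
      Measurable.lintegral_kernel_prod_right (κ := K)
        (f := fun _ x => (‖w x‖₊ : ℝ≥0∞) ^ (2:ℝ)) (hgm.comp measurable_snd)
    filter_upwards [ae_lt_top hintmeas hbound.ne, stmt3_ae_ae_eq K π hinv hweq] with h hfin' heq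
    have hmem : MemLp w 2 (K h) := by
      refine ⟨hwm.aestronglyMeasurable, ?_⟩
      rw [eLpNorm_eq_lintegral_rpow_enorm_toReal two_ne_zero ENNReal.ofNat_ne_top]
      simp only [ENNReal.toReal_ofNat]
      exact ENNReal.rpow_lt_top_of_nonneg (by norm_num) hfin'.ne
    exact (hmem.integrable (by norm_num)).congr heq.symm
  -- contraction
  have hcontr : ∀ f g : Lp ℝ 2 π, ‖T f - T g‖ ≤ β * ‖f - g‖ := by
    intro f g
    have hm := Lp.aestronglyMeasurable (f - g)
    set w : H → ℝ := hm.mk ⇑(f - g) with hwdef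
    have hwm : Measurable w := hm.stronglyMeasurable_mk.measurable
    have hweq : ⇑(f - g) =ᵐ[π] w := hm.ae_eq_mk
    have hweq2 : w =ᵐ[π] fun x => f x - g x := by
      filter_upwards [hweq, Lp.coeFn_sub f g] with x h1 h2
      rw [← h1, h2]; rfl
    have key : ⇑(T f - T g) =ᵐ[π] fun h => β * ∫ x, w x ∂K h := by
      filter_upwards [Lp.coeFn_sub (T f) (T g), hT f, hT g, ae_int f, ae_int g,
        stmt3_ae_ae_eq K π hinv hweq2] with h h1 h2 h3 hif hig heq
      rw [h1]
      simp only [Pi.sub_apply]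
      rw [h2, h3]
      have hw : ∫ x, w x ∂K h = ∫ x, f x ∂K h - ∫ x, g x ∂K h := by
        rw [integral_congr_ae heq, integral_sub hif hig]
      rw [hw]; ring
    have hn : ‖T f - T g‖ = (eLpNorm (fun h => β * ∫ x, w x ∂K h) 2 π).toReal := by
      rw [Lp.norm_def, eLpNorm_congr_ae key]
    rw [hn]
    have hsmul : (fun h => β * ∫ x, w x ∂K h) = β • (fun h => ∫ x, w x ∂K h) := rfl
    rw [hsmul, eLpNorm_const_smul]
    have hIle : eLpNorm (fun h => ∫ x, w x ∂K h) 2 π ≤ eLpNorm w 2 π := by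
      rw [eLpNorm_eq_lintegral_rpow_enorm_toReal two_ne_zero ENNReal.ofNat_ne_top,
        eLpNorm_eq_lintegral_rpow_enorm_toReal two_ne_zero ENNReal.ofNat_ne_top]
      simp only [ENNReal.toReal_ofNat]
      refine ENNReal.rpow_le_rpow ?_ (by norm_num)
      calc ∫⁻ h, (‖∫ x, w x ∂K h‖₊ : ℝ≥0∞) ^ (2:ℝ) ∂π
          ≤ ∫⁻ h, (∫⁻ x, (‖w x‖₊ : ℝ≥0∞) ∂K h) ^ (2:ℝ) ∂π := by
            refine lintegral_mono fun h => ?_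
            gcongr
            exact enorm_integral_le_lintegral_enorm _
        _ ≤ ∫⁻ x, (‖w x‖₊ : ℝ≥0∞) ^ (2:ℝ) ∂π := stmt3_kernel_L2 K π hinv hwm
    have hwnorm : eLpNorm w 2 π = eLpNorm (⇑(f - g)) 2 π := (eLpNorm_congr_ae hweq).symm
    calc ((‖β‖₊ : ℝ≥0∞) * eLpNorm (fun h => ∫ x, w x ∂K h) 2 π).toReal
        ≤ ((‖β‖₊ : ℝ≥0∞) * eLpNorm (⇑(f - g)) 2 π).toReal := by
          apply ENNReal.toReal_mono
          · exact ENNReal.mul_ne_top ENNReal.coe_ne_top (Lp.eLpNorm_lt_top (f - g)).ne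
          · rw [← hwnorm]; exact mul_le_mul_right hIle _
      _ = β * ‖f - g‖ := by
          rw [ENNReal.toReal_mul, Lp.norm_def]
          congr 1
          simp [Real.norm_eq_abs, abs_of_nonneg hβ0]
  -- P equals the orthogonal projection, hence is nonexpansive
  haveI : CompleteSpace S := hS.completeSpace_coe
  have hProj : ∀ f : Lp ℝ 2 π, (Submodule.orthogonalProjection S f : Lp ℝ 2 π) = P f := by
    intro f
    refine Submodule.eq_starProjection_of_mem_of_inner_eq_zero (hPmem f) ?_
    refine (Submodule.norm_eq_iInf_iff_real_inner_eq_zero S (hPmem f)).1 ?_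
    refine le_antisymm (le_ciInf fun s => hPproj f s s.2) ?_
    have hb : BddBelow (Set.range fun w : (S : Set (Lp ℝ 2 π)) => ‖f - ↑w‖) := by
      refine ⟨0, ?_⟩
      rintro x ⟨s, rfl⟩
      exact norm_nonneg _
    exact ciInf_le hb (⟨P f, hPmem f⟩ : (S : Set (Lp ℝ 2 π)))
  have hPlip : ∀ a b : Lp ℝ 2 π, ‖P a - P b‖ ≤ ‖a - b‖ := by
    intro a b
    rw [← hProj a, ← hProj b]
    have h1 : (Submodule.orthogonalProjection S a : Lp ℝ 2 π) - (Submodule.orthogonalProjection S b : Lp ℝ 2 π)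
        = ((Submodule.orthogonalProjection S a - Submodule.orthogonalProjection S b : S) : Lp ℝ 2 π) := rfl
    rw [h1, ← map_sub]
    calc ‖((Submodule.orthogonalProjection S (a - b) : S) : Lp ℝ 2 π)‖
        = ‖Submodule.orthogonalProjection S (a - b)‖ := rfl
      _ ≤ ‖Submodule.orthogonalProjection S‖ * ‖a - b‖ := (Submodule.orthogonalProjection S).le_opNorm _
      _ ≤ 1 * ‖a - b‖ := by
          exact mul_le_mul_of_nonneg_right (Submodule.orthogonalProjection_norm_le S) (norm_nonneg _)
      _ = ‖a - b‖ := one_mul _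
  -- final argument
  have hstep : ‖P Jstar - V‖ ≤ β * ‖Jstar - V‖ := by
    calc ‖P Jstar - V‖ = ‖P (T Jstar) - P (T V)‖ := by rw [hJ, hV]
      _ ≤ ‖T Jstar - T V‖ := hPlip _ _
      _ ≤ β * ‖Jstar - V‖ := hcontr _ _
  have htri : ‖Jstar - V‖ ≤ ‖Jstar - P Jstar‖ + ‖P Jstar - V‖ := by
    have := dist_triangle Jstar (P Jstar) V
    simpa [dist_eq_norm] using this
  have hb : (0:ℝ) < 1 - β := by linarith
  rw [one_div, inv_mul_eq_div, le_div_iff₀ hb]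
  nlinarith [htri, hstep]
end

section
/- Let π be a probability measure on H, let φ¹, …, φᵈ : H → ℝ be linearly independent elements of L²(π) with ‖φⁱ‖_∞ ≤ 1, and let Π be the orthogonal projection of L²(π) onto span{φ¹,…,φᵈ}. Suppose J ∈ L∞ and there exist θ̂ ∈ ℝᵈ and λ < ∞ with ‖J − θ̂ᵀΦ‖_∞ ≤ λ, where Φ = (φ¹,…,φᵈ). Let θ* ∈ ℝᵈ satisfy ‖J − θ*ᵀΦ‖₂ ≤ (1/(1−β)) ‖J − Π J‖₂ for some β ∈ [0,1). Let σ_min > 0 be the minimum eigenvalue of the Gram matrix E_π[Φ Φᵀ]. Then ‖J − θ*ᵀΦ‖_∞ ≤ λ (1 + ((2−β)/(1−β)) √(d/σ_min)). -/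
open MeasureTheory
open scoped ENNReal

/-- Uniform error bound for the learned value function. If `J` is within `λ`
of the span of bounded basis functions in sup norm, `θ*` satisfies the `L²(π)` bound
`‖J − θ*ᵀΦ‖₂ ≤ (1/(1−β))‖J − ΠJ‖₂`, and `σ_min > 0` is the minimum eigenvalue of the
Gram matrix, then `‖J − θ*ᵀΦ‖_∞ ≤ λ (1 + ((2−β)/(1−β)) √(d/σ_min))`. -/
theorem stmt4 {H : Type*} [MeasurableSpace H] (π : Measure H) [IsProbabilityMeasure π]
    {d : ℕ} (φ : Fin d → H → ℝ) (hφm : ∀ i, Measurable (φ i)) (hφb : ∀ i h, |φ i h| ≤ 1)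
    (hφ2 : ∀ i, MemLp (φ i) 2 π)
    (hφli : LinearIndependent ℝ fun i => (hφ2 i).toLp (φ i))
    (J : H → ℝ) (hJm : Measurable J) (CJ : ℝ) (hJb : ∀ h, |J h| ≤ CJ)
    (θhat : Fin d → ℝ) (lam : ℝ)
    (hlam : ∀ h, |J h - ∑ i, θhat i * φ i h| ≤ lam)
    (g : H → ℝ) (θg : Fin d → ℝ) (hg : g = fun h => ∑ i, θg i * φ i h)
    (hgbest : ∀ θ : Fin d → ℝ,
      ∫ h, (J h - g h) ^ 2 ∂π ≤ ∫ h, (J h - ∑ i, θ i * φ i h) ^ 2 ∂π)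
    (β : ℝ) (hβ0 : 0 ≤ β) (hβ1 : β < 1)
    (θstar : Fin d → ℝ)
    (hθstar : Real.sqrt (∫ h, (J h - ∑ i, θstar i * φ i h) ^ 2 ∂π) ≤
      (1 / (1 - β)) * Real.sqrt (∫ h, (J h - g h) ^ 2 ∂π))
    (σmin : ℝ) (hσpos : 0 < σmin)
    (hσ : ∀ v : Fin d → ℝ,
      σmin * ∑ i, (v i) ^ 2 ≤ ∑ i, ∑ j, v i * v j * ∫ h, φ i h * φ j h ∂π) :
    ∀ h, |J h - ∑ i, θstar i * φ i h| ≤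
      lam * (1 + ((2 - β) / (1 - β)) * Real.sqrt (d / σmin)) := by
  -- basic setup
  have hne : Nonempty H := by
    by_contra hc
    rw [not_nonempty_iff] at hc
    have h1 : (1 : ℝ≥0∞) = 0 := by
      rw [← measure_univ (μ := π), Set.univ_eq_empty_iff.mpr hc, measure_empty]
    simp at h1
  have hβ' : (0:ℝ) < 1 - β := by linarith
  have hlam0 : 0 ≤ lam := le_trans (abs_nonneg _) (hlam (Classical.arbitrary H))
  set v : Fin d → ℝ := fun i => θstar i - θhat i with hv
  set b : H → ℝ := fun h => J h - ∑ i, θhat i * φ i h with hb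
  set a : H → ℝ := fun h => J h - ∑ i, θstar i * φ i h with ha
  set u : H → ℝ := fun h => ∑ i, v i * φ i h with hu
  -- Memℒp facts
  have hsum2 : ∀ θ : Fin d → ℝ, MemLp (fun h => ∑ i, θ i * φ i h) 2 π := fun θ =>
    memLp_finset_sum _ (fun i _ => (hφ2 i).const_mul (θ i))
  have hJ2 : MemLp J 2 π :=
    MemLp.of_bound hJm.aestronglyMeasurable CJ (ae_of_all _ fun h => by
      simpa [Real.norm_eq_abs] using hJb h)
  have ha2 : MemLp a 2 π := hJ2.sub (hsum2 θstar)
  have hb2 : MemLp b 2 π := hJ2.sub (hsum2 θhat)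
  have hu2 : MemLp u 2 π := hsum2 v
  -- sqrt of integral of square equals Lp norm
  have key : ∀ (f : H → ℝ) (hf : MemLp f 2 π),
      ‖hf.toLp f‖ = Real.sqrt (∫ h, f h ^ 2 ∂π) := by
    intro f hf
    rw [Lp.norm_toLp, hf.eLpNorm_eq_integral_rpow_norm two_ne_zero ENNReal.ofNat_ne_top,
      ENNReal.toReal_ofReal (by positivity)]
    norm_num [Real.sqrt_eq_rpow]
  -- triangle inequality: ‖u‖₂ ≤ ‖a‖₂ + ‖b‖₂  (since u = b - a)
  have hua : u = fun h => b h - a h := by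
    funext h
    simp only [hu, hb, ha, hv, sub_mul, Finset.sum_sub_distrib]
    ring
  have htri : Real.sqrt (∫ h, u h ^ 2 ∂π) ≤
      Real.sqrt (∫ h, b h ^ 2 ∂π) + Real.sqrt (∫ h, a h ^ 2 ∂π) := by
    rw [← key u hu2, ← key b hb2, ← key a ha2]
    have : hu2.toLp u = hb2.toLp b - ha2.toLp a := by
      rw [← MemLp.toLp_sub hb2 ha2]
      apply MemLp.toLp_congr
      filter_upwards with h
      simp [hua, Pi.sub_apply]
    rw [this]
    exact norm_sub_le _ _
  -- ‖b‖₂ ≤ lam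
  have hbint : Integrable (fun h => b h ^ 2) π := by
    refine (integrable_const (lam ^ 2)).mono' ?_ (ae_of_all _ fun h => ?_)
    · exact ((hJm.sub (Finset.measurable_sum _ fun i _ =>
        (measurable_const.mul (hφm i)))).pow_const 2).aestronglyMeasurable
    · simp only [Real.norm_eq_abs, abs_pow, sq_abs]
      calc b h ^ 2 = |b h| ^ 2 := (sq_abs _).symm
        _ ≤ lam ^ 2 := pow_le_pow_left₀ (abs_nonneg _) (hlam h) 2
  have hbsq : ∫ h, b h ^ 2 ∂π ≤ lam ^ 2 := by
    calc ∫ h, b h ^ 2 ∂π ≤ ∫ _, lam ^ 2 ∂π := by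
          refine integral_mono hbint (integrable_const _) fun h => ?_
          calc b h ^ 2 = |b h| ^ 2 := (sq_abs _).symm
            _ ≤ lam ^ 2 := pow_le_pow_left₀ (abs_nonneg _) (hlam h) 2
      _ = lam ^ 2 := by simp
  have hBlam : Real.sqrt (∫ h, b h ^ 2 ∂π) ≤ lam := by
    calc Real.sqrt (∫ h, b h ^ 2 ∂π) ≤ Real.sqrt (lam ^ 2) := Real.sqrt_le_sqrt hbsq
      _ = lam := Real.sqrt_sq hlam0
  -- ‖a‖₂ ≤ lam / (1 - β)
  have hgsq : ∫ h, (J h - g h) ^ 2 ∂π ≤ lam ^ 2 := le_trans (hgbest θhat) hbsq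
  have hAlam : Real.sqrt (∫ h, a h ^ 2 ∂π) ≤ lam / (1 - β) := by
    calc Real.sqrt (∫ h, a h ^ 2 ∂π) ≤
        (1 / (1 - β)) * Real.sqrt (∫ h, (J h - g h) ^ 2 ∂π) := hθstar
      _ ≤ (1 / (1 - β)) * lam := by
          refine mul_le_mul_of_nonneg_left ?_ (by positivity)
          calc Real.sqrt (∫ h, (J h - g h) ^ 2 ∂π) ≤ Real.sqrt (lam ^ 2) :=
                Real.sqrt_le_sqrt hgsq
            _ = lam := Real.sqrt_sq hlam0
      _ = lam / (1 - β) := by ring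
  -- ‖u‖₂ ≤ lam * (2 - β) / (1 - β)
  have hU : Real.sqrt (∫ h, u h ^ 2 ∂π) ≤ lam * (2 - β) / (1 - β) := by
    calc Real.sqrt (∫ h, u h ^ 2 ∂π) ≤
        Real.sqrt (∫ h, b h ^ 2 ∂π) + Real.sqrt (∫ h, a h ^ 2 ∂π) := htri
      _ ≤ lam + lam / (1 - β) := add_le_add hBlam hAlam
      _ = lam * (2 - β) / (1 - β) := by field_simp; ring
  -- Gram expansion: ∫ u² = ∑∑ vᵢvⱼ ∫ φᵢφⱼ
  have hint : ∀ i j, Integrable (fun h => φ i h * φ j h) π := by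
    intro i j
    refine (integrable_const (1:ℝ)).mono'
      ((hφm i).mul (hφm j)).aestronglyMeasurable (ae_of_all _ fun h => ?_)
    rw [Real.norm_eq_abs, abs_mul]
    exact mul_le_one₀ (hφb i h) (abs_nonneg _) (hφb j h)
  have hexp : ∫ h, u h ^ 2 ∂π = ∑ i, ∑ j, v i * v j * ∫ h, φ i h * φ j h ∂π := by
    have hpt : ∀ h, u h ^ 2 = ∑ i, ∑ j, v i * v j * (φ i h * φ j h) := by
      intro h
      simp only [hu, sq, Finset.sum_mul_sum]
      exact Finset.sum_congr rfl fun i _ => Finset.sum_congr rfl fun j _ => by ring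
    simp_rw [hpt]
    rw [integral_finset_sum _ (fun i _ =>
      integrable_finset_sum _ (fun j _ => ((hint i j).const_mul _)))]
    refine Finset.sum_congr rfl fun i _ => ?_
    rw [integral_finset_sum _ (fun j _ => ((hint i j).const_mul _))]
    exact Finset.sum_congr rfl fun j _ => integral_const_mul _ _
  -- bound on ∑ v²
  have hUnn : 0 ≤ ∫ h, u h ^ 2 ∂π := integral_nonneg fun h => sq_nonneg _
  have hS : σmin * ∑ i, v i ^ 2 ≤ (lam * (2 - β) / (1 - β)) ^ 2 := by
    calc σmin * ∑ i, v i ^ 2 ≤ ∑ i, ∑ j, v i * v j * ∫ h, φ i h * φ j h ∂π := hσ v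
      _ = ∫ h, u h ^ 2 ∂π := hexp.symm
      _ = Real.sqrt (∫ h, u h ^ 2 ∂π) ^ 2 := (Real.sq_sqrt hUnn).symm
      _ ≤ (lam * (2 - β) / (1 - β)) ^ 2 :=
          pow_le_pow_left₀ (Real.sqrt_nonneg _) hU 2
  have hSv : Real.sqrt (∑ i, v i ^ 2) ≤ lam * (2 - β) / (1 - β) / Real.sqrt σmin := by
    have h1 : ∑ i, v i ^ 2 ≤ (lam * (2 - β) / (1 - β)) ^ 2 / σmin := by
      rw [le_div_iff₀ hσpos]; linarith [hS]
    calc Real.sqrt (∑ i, v i ^ 2) ≤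
        Real.sqrt ((lam * (2 - β) / (1 - β)) ^ 2 / σmin) := Real.sqrt_le_sqrt h1
      _ = lam * (2 - β) / (1 - β) / Real.sqrt σmin := by
          rw [Real.sqrt_div (sq_nonneg _), Real.sqrt_sq (div_nonneg (mul_nonneg hlam0 (by linarith)) (by linarith))]
  -- final pointwise bound
  intro h
  have hsplit : |J h - ∑ i, θstar i * φ i h| ≤ |b h| + |u h| := by
    have : J h - ∑ i, θstar i * φ i h = b h - u h := by
      simp only [hb, hu, hv, sub_mul, Finset.sum_sub_distrib]
      ring
    rw [this]
    exact abs_sub _ _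
  have hu1 : |u h| ≤ Real.sqrt (d * ∑ i, v i ^ 2) := by
    calc |u h| ≤ ∑ i, |v i * φ i h| := Finset.abs_sum_le_sum_abs _ _
      _ ≤ ∑ i, |v i| := by
          refine Finset.sum_le_sum fun i _ => ?_
          rw [abs_mul]
          exact mul_le_of_le_one_right (abs_nonneg _) (hφb i h)
      _ ≤ Real.sqrt (d * ∑ i, v i ^ 2) := by
          refine Real.le_sqrt_of_sq_le ?_
          calc (∑ i, |v i|) ^ 2 ≤ (Finset.univ.card : ℝ) * ∑ i, |v i| ^ 2 :=
                sq_sum_le_card_mul_sum_sq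
            _ = d * ∑ i, v i ^ 2 := by simp [sq_abs]
  have hub : |u h| ≤ Real.sqrt d / Real.sqrt σmin * (lam * (2 - β) / (1 - β)) := by
    calc |u h| ≤ Real.sqrt (d * ∑ i, v i ^ 2) := hu1
      _ = Real.sqrt d * Real.sqrt (∑ i, v i ^ 2) := Real.sqrt_mul (Nat.cast_nonneg d) _
      _ ≤ Real.sqrt d * (lam * (2 - β) / (1 - β) / Real.sqrt σmin) :=
          mul_le_mul_of_nonneg_left hSv (Real.sqrt_nonneg _)
      _ = Real.sqrt d / Real.sqrt σmin * (lam * (2 - β) / (1 - β)) := by ring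
  have hrhs : lam * (1 + ((2 - β) / (1 - β)) * Real.sqrt (d / σmin)) =
      lam + Real.sqrt d / Real.sqrt σmin * (lam * (2 - β) / (1 - β)) := by
    rw [Real.sqrt_div (Nat.cast_nonneg d)]
    ring
  rw [hrhs]
  exact le_trans hsplit (add_le_add (hlam h) hub)
end

section
/- Let X be a Markov chain on a measurable space S whose n-step transition kernel satisfies a Doeblin minorization: there is a nontrivial measure λ with Pⁿ(x, A) ≥ λ(A) for all x ∈ S and measurable A, where λ(S) = ε > 0. Then for any two initial distributions μ, ν, ‖μ P^{kn} − ν P^{kn}‖_{TV} ≤ 2(1 − ε)^k, so the chain has a unique invariant measure and converges to it geometrically in total variation. -/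
open MeasureTheory ProbabilityTheory

open scoped ENNReal

set_option linter.unusedSectionVars false
namespace Stmt12Aux

variable {S : Type*} [MeasurableSpace S] (P : Kernel S S) [IsMarkovKernel P]

/-- one step of the chain on measures -/
noncomputable def T : Measure S → Measure S := fun μ => μ.bind (fun s => P s)

/-- the m-step kernel as a function -/
noncomputable def K (m : ℕ) : S → Measure S := fun x => (T P)^[m] (Measure.dirac x)

lemma K_succ (m : ℕ) : K P (m + 1) = fun x => (K P m x).bind (fun s => P s) := by
  funext x
  simp only [K, Function.iterate_succ_apply']
  rfl

lemma measurable_K (m : ℕ) : Measurable (K P m) := by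
  induction m with
  | zero => exact Measure.measurable_dirac
  | succ m ih =>
      rw [K_succ]
      exact (Measure.measurable_bind' P.measurable).comp ih

lemma iter_eq_bind (μ : Measure S) (m : ℕ) : (T P)^[m] μ = μ.bind (K P m) := by
  induction m with
  | zero => simp only [K, Function.iterate_zero, id_eq]; exact Measure.bind_dirac.symm
  | succ m ih =>
      rw [Function.iterate_succ_apply', ih, K_succ]
      exact Measure.bind_bind (measurable_K P m).aemeasurable P.measurable.aemeasurable

lemma T_univ (μ : Measure S) : T P μ Set.univ = μ Set.univ := by
  rw [T, Measure.bind_apply MeasurableSet.univ P.measurable.aemeasurable]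
  simp

lemma iter_univ (μ : Measure S) (m : ℕ) : (T P)^[m] μ Set.univ = μ Set.univ := by
  induction m with
  | zero => simp
  | succ m ih => rw [Function.iterate_succ_apply', T_univ, ih]

lemma K_univ (m : ℕ) (x : S) : K P m x Set.univ = 1 := by
  rw [K, iter_univ]; simp

lemma bind_univ (μ : Measure S) (m : ℕ) : μ.bind (K P m) Set.univ = μ Set.univ := by
  rw [← iter_eq_bind, iter_univ]

lemma bind_add (μ ν : Measure S) (m : ℕ) :
    (μ + ν).bind (K P m) = μ.bind (K P m) + ν.bind (K P m) := by
  ext s hs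
  rw [Measure.add_apply, Measure.bind_apply hs (measurable_K P m).aemeasurable,
    Measure.bind_apply hs (measurable_K P m).aemeasurable, Measure.bind_apply hs (measurable_K P m).aemeasurable,
    lintegral_add_measure]

variable {n : ℕ} {lam : Measure S}

lemma bind_ge (hmin : ∀ x A, MeasurableSet A → lam A ≤ K P n x A) (α : Measure S) :
    (α Set.univ) • lam ≤ α.bind (K P n) := by
  rw [Measure.le_iff]
  intro s hs
  rw [Measure.smul_apply, Measure.bind_apply hs (measurable_K P n).aemeasurable, smul_eq_mul]
  calc α Set.univ * lam s = ∫⁻ _, lam s ∂α := by rw [lintegral_const, mul_comm]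
    _ ≤ ∫⁻ x, K P n x s ∂α := lintegral_mono fun x => hmin x s hs

/-- the measures `λ Qᵏ` in the standard construction of the invariant measure -/
noncomputable def mseq (n : ℕ) (lam : Measure S) : ℕ → Measure S
  | 0 => lam
  | (k + 1) => (mseq n lam k).bind (K P n) - ((mseq n lam k) Set.univ) • lam

end Stmt12Aux

open Stmt12Aux


set_option maxHeartbeats 1000000 in
/-- Doeblin minorization. If the `n`-step kernel satisfies
`Pⁿ(x, ·) ≥ λ(·)` with `λ(S) = ε > 0`, then for any two initial probability
distributions the `kn`-step distributions satisfy
`|μP^{kn}(A) − νP^{kn}(A)| ≤ (1−ε)^k` for all measurable `A`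
(equivalently `‖μP^{kn} − νP^{kn}‖_TV ≤ 2(1−ε)^k`), and there is a unique
invariant probability measure. -/
theorem stmt12 {S : Type*} [MeasurableSpace S] (P : Kernel S S) [IsMarkovKernel P]
    (n : ℕ) (hn : 0 < n) (lam : Measure S) (ε : ℝ) (hε : 0 < ε)
    (hlamtot : lam Set.univ = ENNReal.ofReal ε)
    (hmin : ∀ (x : S) (A : Set S), MeasurableSet A →
      lam A ≤ ((fun μ : Measure S => μ.bind (fun s => P s))^[n] (Measure.dirac x)) A) :
    (∀ μ ν : Measure S, IsProbabilityMeasure μ → IsProbabilityMeasure ν →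
        ∀ (k : ℕ) (A : Set S), MeasurableSet A →
        |(((fun μ : Measure S => μ.bind (fun s => P s))^[k * n] μ) A).toReal -
            (((fun μ : Measure S => μ.bind (fun s => P s))^[k * n] ν) A).toReal| ≤
          (1 - ε) ^ k) ∧
      ∃! πinv : Measure S, IsProbabilityMeasure πinv ∧ πinv.bind (fun s => P s) = πinv := by
  have hfT : (fun μ : Measure S => μ.bind (fun s => P s)) = T P := rfl
  set e : ℝ≥0∞ := ENNReal.ofReal ε with he_def
  have hmin' : ∀ (x : S) (A : Set S), MeasurableSet A → lam A ≤ K P n x A := by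
    intro x A hA
    simpa [K, hfT] using hmin x A hA
  have he0 : e ≠ 0 := by
    simp only [he_def, ne_eq, ENNReal.ofReal_eq_zero, not_le]; exact hε
  have heTop : e ≠ ⊤ := ENNReal.ofReal_ne_top
  have hlamfin : IsFiniteMeasure lam := ⟨by rw [hlamtot]; exact ENNReal.ofReal_lt_top⟩
  -- S is nonempty
  have hS : Nonempty S := by
    by_contra h
    rw [not_nonempty_iff] at h
    have : lam Set.univ = 0 := by
      rw [Set.univ_eq_empty_iff.mpr h]; exact measure_empty
    rw [hlamtot] at this
    exact he0 this
  obtain ⟨x₀⟩ := hS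
  have he1 : e ≤ 1 := by
    calc e = lam Set.univ := hlamtot.symm
      _ ≤ K P n x₀ Set.univ := hmin' x₀ Set.univ MeasurableSet.univ
      _ = 1 := K_univ P n x₀
  have hε1 : ε ≤ 1 := by
    have := he1
    rw [he_def, ← ENNReal.ofReal_one, ENNReal.ofReal_le_ofReal_iff zero_le_one] at this
    exact this
  set r : ℝ≥0∞ := 1 - e with hr_def
  have hr_ofReal : r = ENNReal.ofReal (1 - ε) := by
    rw [hr_def, he_def, ENNReal.ofReal_sub _ hε.le, ENNReal.ofReal_one]
  have hrTop : r ≠ ⊤ := by rw [hr_ofReal]; exact ENNReal.ofReal_ne_top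
  have hr1 : r ≤ 1 := tsub_le_self
  have hr_toReal : r.toReal = 1 - ε := by
    rw [hr_ofReal, ENNReal.toReal_ofReal (by linarith)]
  -- the one-step decomposition
  have step : ∀ α : Measure S, α Set.univ ≠ ⊤ →
      α.bind (K P n) = (α.bind (K P n) - α Set.univ • lam) + α Set.univ • lam ∧
      (α.bind (K P n) - α Set.univ • lam) Set.univ = α Set.univ * r := by
    intro α hfin
    haveI : IsFiniteMeasure (α Set.univ • lam) := ⟨by
      rw [Measure.smul_apply, smul_eq_mul]
      exact (ENNReal.mul_ne_top hfin (by rw [hlamtot]; exact ENNReal.ofReal_ne_top)).lt_top⟩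
    have hge := bind_ge P hmin' α
    constructor
    · exact (Measure.sub_add_cancel_of_le hge).symm
    · rw [Measure.sub_apply MeasurableSet.univ hge, bind_univ, Measure.smul_apply,
        smul_eq_mul, ← hlamtot] at *
      rw [hr_def, ENNReal.mul_sub (fun _ _ => hfin), mul_one, hlamtot]
  -- contraction: the first conjunct
  have key : ∀ μ ν : Measure S, IsProbabilityMeasure μ → IsProbabilityMeasure ν →
      ∀ (k : ℕ) (A : Set S), MeasurableSet A →
      |(((fun μ : Measure S => μ.bind (fun s => P s))^[k * n] μ) A).toReal -
          (((fun μ : Measure S => μ.bind (fun s => P s))^[k * n] ν) A).toReal| ≤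
        (1 - ε) ^ k := by
    intro μ ν hμ hν k A hA
    rw [hfT]
    -- decomposition with common part
    have dec : ∀ k : ℕ, ∃ ρ α β : Measure S,
        (T P)^[k * n] μ = ρ + α ∧ (T P)^[k * n] ν = ρ + β ∧
        α Set.univ = r ^ k ∧ β Set.univ = r ^ k := by
      intro k
      induction k with
      | zero =>
          refine ⟨0, μ, ν, by simp, by simp, ?_, ?_⟩ <;>
            simp [measure_univ]
      | succ k ih =>
          obtain ⟨ρ, α, β, h1, h2, h3, h4⟩ := ih
          have hαfin : α Set.univ ≠ ⊤ := by rw [h3]; exact ENNReal.pow_ne_top hrTop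
          have hβfin : β Set.univ ≠ ⊤ := by rw [h4]; exact ENNReal.pow_ne_top hrTop
          obtain ⟨hαeq, hαmass⟩ := step α hαfin
          obtain ⟨hβeq, hβmass⟩ := step β hβfin
          refine ⟨ρ.bind (K P n) + (r ^ k) • lam,
            α.bind (K P n) - α Set.univ • lam,
            β.bind (K P n) - β Set.univ • lam, ?_, ?_, ?_, ?_⟩
          · have hkn : (k + 1) * n = n + k * n := by ring
            rw [hkn, Function.iterate_add_apply, h1, iter_eq_bind, bind_add, ← h3,
              add_assoc, add_comm (α Set.univ • lam) _, ← hαeq]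
          · have hkn : (k + 1) * n = n + k * n := by ring
            rw [hkn, Function.iterate_add_apply, h2, iter_eq_bind, bind_add, ← h4,
              add_assoc, add_comm (β Set.univ • lam) _, ← hβeq]
          · rw [hαmass, h3, pow_succ]
          · rw [hβmass, h4, pow_succ]
    obtain ⟨ρ, α, β, h1, h2, h3, h4⟩ := dec k
    have hrk1 : r ^ k ≤ 1 := pow_le_one' hr1 k
    have hαA : α A ≤ r ^ k := h3 ▸ ((measure_mono (Set.subset_univ A)))
    have hβA : β A ≤ r ^ k := h4 ▸ ((measure_mono (Set.subset_univ A)))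
    have hαAne : α A ≠ ⊤ := (hαA.trans_lt (hrk1.trans_lt ENNReal.one_lt_top)).ne
    have hβAne : β A ≠ ⊤ := (hβA.trans_lt (hrk1.trans_lt ENNReal.one_lt_top)).ne
    have hρα : (ρ + α) Set.univ = 1 := by rw [← h1, iter_univ]; exact measure_univ
    have hρAne : ρ A ≠ ⊤ := by
      refine ((measure_mono (Set.subset_univ A)).trans_lt ?_).ne
      calc ρ Set.univ ≤ (ρ + α) Set.univ := by
            rw [Measure.add_apply]; exact le_self_add
        _ = 1 := hρα
        _ < ⊤ := ENNReal.one_lt_top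
    rw [h1, h2, Measure.add_apply, Measure.add_apply,
      ENNReal.toReal_add hρAne hαAne, ENNReal.toReal_add hρAne hβAne]
    have hbound : ∀ γ : Measure S, γ A ≤ r ^ k → γ A ≠ ⊤ → (γ A).toReal ≤ (1 - ε) ^ k := by
      intro γ h h'
      calc (γ A).toReal ≤ (r ^ k).toReal :=
            ENNReal.toReal_mono (ENNReal.pow_ne_top hrTop) h
        _ = (1 - ε) ^ k := by rw [ENNReal.toReal_pow, hr_toReal]
    have hbα := hbound α hαA hαAne
    have hbβ := hbound β hβA hβAne
    have hposα : 0 ≤ (α A).toReal := ENNReal.toReal_nonneg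
    have hposβ : 0 ≤ (β A).toReal := ENNReal.toReal_nonneg
    rw [abs_sub_le_iff]
    constructor <;> linarith
  refine ⟨key, ?_⟩
  -- limit lemma
  have hlim : ∀ x : ℝ, (∀ k : ℕ, |x| ≤ (1 - ε) ^ k) → x = 0 := by
    intro x hx
    have htend : Filter.Tendsto (fun k : ℕ => (1 - ε) ^ k) Filter.atTop (nhds 0) :=
      tendsto_pow_atTop_nhds_zero_of_lt_one (by linarith) (by linarith)
    have : |x| ≤ 0 := ge_of_tendsto htend (Filter.Eventually.of_forall hx)
    have := le_antisymm this (abs_nonneg x)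
    exact abs_eq_zero.mp this
  -- construction of the invariant measure
  set m : ℕ → Measure S := mseq P n lam with hm_def
  have hm_succ : ∀ k, m (k + 1) = (m k).bind (K P n) - ((m k) Set.univ) • lam := by
    intro k; rw [hm_def]; rfl
  have hmass : ∀ k, m k Set.univ = e * r ^ k := by
    intro k
    induction k with
    | zero => simp [hm_def, mseq, hlamtot, he_def]
    | succ k ih =>
        have hfin : m k Set.univ ≠ ⊤ :=
          ih ▸ ENNReal.mul_ne_top heTop (ENNReal.pow_ne_top hrTop)
        rw [hm_succ, (step (m k) hfin).2, ih, pow_succ, mul_assoc]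
  have hsum_mass : ∑' k, m k Set.univ = 1 := by
    have : ∑' k : ℕ, m k Set.univ = e * ∑' k : ℕ, r ^ k := by
      simp_rw [hmass]; exact ENNReal.tsum_mul_left
    rw [this, ENNReal.tsum_geometric, hr_def, ENNReal.sub_sub_cancel ENNReal.one_ne_top he1,
      ENNReal.mul_inv_cancel he0 heTop]
  set πt : Measure S := Measure.sum m with hπt_def
  have hπt_univ : πt Set.univ = 1 := by
    rw [hπt_def, Measure.sum_apply _ MeasurableSet.univ]; exact hsum_mass
  haveI hπtprob : IsProbabilityMeasure πt := ⟨hπt_univ⟩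
  -- πt is invariant under the n-step kernel
  have hfix_n : πt.bind (K P n) = πt := by
    ext s hs
    rw [Measure.bind_apply hs (measurable_K P n).aemeasurable, hπt_def, lintegral_sum_measure]
    have heach : ∀ k, ∫⁻ x, K P n x s ∂(m k) = m (k + 1) s + m k Set.univ * lam s := by
      intro k
      have hfin : m k Set.univ ≠ ⊤ :=
        (hmass k) ▸ ENNReal.mul_ne_top heTop (ENNReal.pow_ne_top hrTop)
      have := (step (m k) hfin).1
      calc ∫⁻ x, K P n x s ∂(m k) = (m k).bind (K P n) s :=
            (Measure.bind_apply hs (measurable_K P n).aemeasurable).symm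
        _ = (((m k).bind (K P n) - m k Set.univ • lam) + m k Set.univ • lam) s := by
            rw [← this]
        _ = m (k + 1) s + m k Set.univ * lam s := by
            rw [Measure.add_apply, ← hm_succ, Measure.smul_apply, smul_eq_mul]
    simp_rw [heach]
    rw [ENNReal.tsum_add, ENNReal.tsum_mul_right, hsum_mass, one_mul]
    have hshift : ∑' k : ℕ, m k s = m 0 s + ∑' k : ℕ, m (k + 1) s :=
      tsum_eq_zero_add' ENNReal.summable
    rw [Measure.sum_apply _ hs, hshift]
    have hm0 : m 0 s = lam s := by rw [hm_def]; rfl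
    rw [hm0, add_comm]
  have hfix_n' : (T P)^[n] πt = πt := by rw [iter_eq_bind]; exact hfix_n
  -- any n-step-invariant probability measure equals πt
  have hconv : ∀ σ : Measure S, IsProbabilityMeasure σ → (T P)^[n] σ = σ → σ = πt := by
    intro σ hσ hfixσ
    have hiterσ : ∀ k, (T P)^[k * n] σ = σ := by
      intro k
      rw [mul_comm, Function.iterate_mul]
      exact Function.iterate_fixed hfixσ k
    have hiterπ : ∀ k, (T P)^[k * n] πt = πt := by
      intro k
      rw [mul_comm, Function.iterate_mul]
      exact Function.iterate_fixed hfix_n' k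
    ext s hs
    have hdiff : ∀ k : ℕ, |(σ s).toReal - (πt s).toReal| ≤ (1 - ε) ^ k := by
      intro k
      have := key σ πt hσ hπtprob k s hs
      rw [hfT, hiterσ, hiterπ] at this
      exact this
    have := hlim _ hdiff
    have hσfin : σ s ≠ ⊤ := measure_ne_top σ s
    have hπfin : πt s ≠ ⊤ := measure_ne_top πt s
    exact (ENNReal.toReal_eq_toReal_iff' hσfin hπfin).mp (by linarith)
  -- πt is invariant under one step
  have hstepπ : T P πt = πt := by
    have hTprob : IsProbabilityMeasure (T P πt) := ⟨by rw [T_univ]; exact hπt_univ⟩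
    have hfixT : (T P)^[n] (T P πt) = T P πt := by
      rw [← Function.iterate_succ_apply, Function.iterate_succ_apply', hfix_n']
    exact hconv _ hTprob hfixT
  refine ⟨πt, ⟨hπtprob, hstepπ⟩, ?_⟩
  rintro π' ⟨hπ'prob, hπ'fix⟩
  have : (T P)^[n] π' = π' := Function.iterate_fixed hπ'fix n
  exact hconv π' hπ'prob this
end

section
/- Let π be a probability measure on H, φ¹,…,φᵈ ∈ L²(π) linearly independent, Π the L²(π)-projection onto their span, and T an affine β-contraction on L²(π) of the form Tf = c + βKf where K is a non-expansive linear operator on L²(π). Let θ* correspond to the fixed point of Π∘T. Then for every θ ∈ ℝᵈ with θ ≠ θ*, the inner product ⟨θᵀΦ − θ*ᵀΦ, T(θᵀΦ) − θᵀΦ⟩_{L²(π)} ≤ (β−1)‖θᵀΦ − θ*ᵀΦ‖₂² < 0. -/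
open MeasureTheory RealInnerProductSpace

/-- For an affine `β`-contraction `T f = c + β K f` on `L²(π)` (with `K` a
non-expansive linear operator), `Π` the orthogonal projection onto the span of linearly
independent `Φ`, and `θ*` corresponding to the fixed point of `Π ∘ T`, for every
`θ ≠ θ*` the inner product `⟪θᵀΦ − θ*ᵀΦ, T(θᵀΦ) − θᵀΦ⟫ ≤ (β−1)‖θᵀΦ − θ*ᵀΦ‖² < 0`. -/
theorem stmt15 {H : Type*} [MeasurableSpace H] (π : Measure H) [IsProbabilityMeasure π]
    {d : ℕ} (Φ : Fin d → Lp ℝ 2 π) (hΦli : LinearIndependent ℝ Φ)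
    (Kop : Lp ℝ 2 π →L[ℝ] Lp ℝ 2 π) (hK : ∀ f, ‖Kop f‖ ≤ ‖f‖)
    (c : Lp ℝ 2 π) (β : ℝ) (hβ0 : 0 ≤ β) (hβ1 : β < 1)
    (T : Lp ℝ 2 π → Lp ℝ 2 π) (hT : ∀ f, T f = c + β • Kop f)
    (P : Lp ℝ 2 π → Lp ℝ 2 π)
    (hPmem : ∀ f, P f ∈ Submodule.span ℝ (Set.range Φ))
    (hPbest : ∀ f, ∀ s ∈ Submodule.span ℝ (Set.range Φ), ‖f - P f‖ ≤ ‖f - s‖)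
    (θs : Fin d → ℝ) (hfix : P (T (∑ i, θs i • Φ i)) = ∑ i, θs i • Φ i) :
    ∀ θ : Fin d → ℝ, θ ≠ θs →
      ⟪(∑ i, θ i • Φ i) - ∑ i, θs i • Φ i, T (∑ i, θ i • Φ i) - ∑ i, θ i • Φ i⟫ ≤
          (β - 1) * ‖(∑ i, θ i • Φ i) - ∑ i, θs i • Φ i‖ ^ 2 ∧
        (β - 1) * ‖(∑ i, θ i • Φ i) - ∑ i, θs i • Φ i‖ ^ 2 < 0 := by
  intro θ hθ
  set S := Submodule.span ℝ (Set.range Φ) with hS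
  -- orthogonality of f - P f to S
  have horth : ∀ f, ∀ w ∈ S, ⟪f - P f, w⟫ = 0 := by
    intro f
    have hmin : ‖f - P f‖ = ⨅ w : (↑S : Set (Lp ℝ 2 π)), ‖f - w‖ := by
      refine le_antisymm (le_ciInf fun w => hPbest f w w.2) ?_
      exact ciInf_le ⟨0, fun x hx => by rcases hx with ⟨w, rfl⟩; positivity⟩
        (⟨P f, hPmem f⟩ : (↑S : Set (Lp ℝ 2 π)))
    exact (Submodule.norm_eq_iInf_iff_real_inner_eq_zero S (hPmem f)).1 hmin
  set x : Lp ℝ 2 π := ∑ i, θ i • Φ i with hx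
  set xs : Lp ℝ 2 π := ∑ i, θs i • Φ i with hxs
  have hxS : x ∈ S := Submodule.sum_mem _ fun i _ =>
    Submodule.smul_mem _ _ (Submodule.subset_span ⟨i, rfl⟩)
  have hxsS : xs ∈ S := Submodule.sum_mem _ fun i _ =>
    Submodule.smul_mem _ _ (Submodule.subset_span ⟨i, rfl⟩)
  have heS : x - xs ∈ S := Submodule.sub_mem _ hxS hxsS
  -- e ≠ 0
  have hne : x - xs ≠ 0 := by
    intro h
    apply hθ
    have : ∑ i, (θ i - θs i) • Φ i = 0 := by
      rw [← h, hx, hxs, ← Finset.sum_sub_distrib]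
      exact Finset.sum_congr rfl fun i _ => (sub_smul _ _ _)
    have hall := linearIndependent_iff'.1 hΦli Finset.univ _ this
    funext i
    have := hall i (Finset.mem_univ i)
    linarith
  have hnorm : 0 < ‖x - xs‖ := norm_pos_iff.2 hne
  -- P nonexpansive
  have hPnon : ∀ f g, ‖P f - P g‖ ≤ ‖f - g‖ := by
    intro f g
    have hsplit : f - g = ((f - P f) - (g - P g)) + (P f - P g) := by abel
    have hperp : ⟪(f - P f) - (g - P g), P f - P g⟫ = 0 := by
      have hm : P f - P g ∈ S := Submodule.sub_mem _ (hPmem f) (hPmem g)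
      rw [inner_sub_left, horth f _ hm, horth g _ hm, sub_zero]
    have hpyth : ‖f - g‖ ^ 2 = ‖(f - P f) - (g - P g)‖ ^ 2 + ‖P f - P g‖ ^ 2 := by
      rw [hsplit, norm_add_sq_real, hperp]; ring
    nlinarith [norm_nonneg ((f - P f) - (g - P g)), norm_nonneg (P f - P g),
      norm_nonneg (f - g)]
  -- T contraction
  have hTcon : ∀ f g, ‖T f - T g‖ ≤ β * ‖f - g‖ := by
    intro f g
    have : T f - T g = β • (Kop f - Kop g) := by
      rw [hT, hT]; module
    rw [this, norm_smul, Real.norm_eq_abs, abs_of_nonneg hβ0]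
    have := hK (f - g)
    rw [map_sub] at this
    exact mul_le_mul_of_nonneg_left this hβ0
  -- main bound
  have hcontr : ‖P (T x) - xs‖ ≤ β * ‖x - xs‖ := by
    calc ‖P (T x) - xs‖ = ‖P (T x) - P (T xs)‖ := by rw [hfix]
      _ ≤ ‖T x - T xs‖ := hPnon _ _
      _ ≤ β * ‖x - xs‖ := hTcon _ _
  have hmain : ⟪x - xs, T x - x⟫ ≤ (β - 1) * ‖x - xs‖ ^ 2 := by
    have hdecomp : T x - x = (T x - P (T x)) + ((P (T x) - xs) - (x - xs)) := by abel
    have h1 : ⟪x - xs, T x - P (T x)⟫ = 0 := by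
      rw [real_inner_comm]; exact horth (T x) _ heS
    have h2 : ⟪x - xs, P (T x) - xs⟫ ≤ β * ‖x - xs‖ ^ 2 := by
      calc ⟪x - xs, P (T x) - xs⟫ ≤ ‖x - xs‖ * ‖P (T x) - xs‖ :=
            real_inner_le_norm _ _
        _ ≤ ‖x - xs‖ * (β * ‖x - xs‖) :=
            mul_le_mul_of_nonneg_left hcontr (norm_nonneg _)
        _ = β * ‖x - xs‖ ^ 2 := by ring
    have h3 : ⟪x - xs, x - xs⟫ = ‖x - xs‖ ^ 2 := real_inner_self_eq_norm_sq _
    have key : ⟪x - xs, T x - x⟫ =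
        (⟪x - xs, T x - P (T x)⟫ + ⟪x - xs, P (T x) - xs⟫) - ⟪x - xs, x - xs⟫ := by
      rw [← inner_add_right, ← inner_sub_right]
      congr 1
      abel
    rw [key, h1, h3]
    linarith
  exact ⟨hmain, mul_neg_of_neg_of_pos (by linarith) (pow_pos hnorm 2)⟩
end
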